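/- arXiv:2505.11104 — 6 statements merged into one kernel-verified Lean document; each statement's English description precedes it below -/
import Mathlib

section
/- Coarse correction gives a descent direction (Lemma 2.1): if g is convex, R = Pᵀ, and x⁺ ∈ ℝ^N satisfies ψ(x⁺) < ψ(x_k), then the direction d = P(x⁺ − x_k) satisfies ⟨∇f(y_k), d⟩ ≤ ψ(x⁺) − ψ(x_k) < 0; in particular d is a descent direction for f at y_k. -/
open scoped RealInnerProductSpace

/-- Coarse correction gives a descent direction (Lemma 2.1): if `g` is convex, `R = Pᵀ`,
and `x⁺` satisfies `ψ(x⁺) < ψ(x_k)`, then the direction `d = P(x⁺ − x_k)` satisfies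
`⟪∇f(y_k), d⟫ ≤ ψ(x⁺) − ψ(x_k) < 0`; in particular `d` is a descent direction for `f`. -/
theorem coarse_correction_descent_direction
    (n N : ℕ) (hn : 0 < n) (hN : 0 < N)
    (f : EuclideanSpace ℝ (Fin n) → ℝ) (g : EuclideanSpace ℝ (Fin N) → ℝ)
    (hf : Differentiable ℝ f) (hg : Differentiable ℝ g)
    (hgconv : ConvexOn ℝ Set.univ g)
    (P : EuclideanSpace ℝ (Fin N) →L[ℝ] EuclideanSpace ℝ (Fin n))
    (R : EuclideanSpace ℝ (Fin n) →L[ℝ] EuclideanSpace ℝ (Fin N))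
    (hR : R = ContinuousLinearMap.adjoint P)
    (yk : EuclideanSpace ℝ (Fin n))
    (xk : EuclideanSpace ℝ (Fin N)) (hxk : xk = R yk)
    (v : EuclideanSpace ℝ (Fin N)) (hv : v = R (gradient f yk) - gradient g xk)
    (ψ : EuclideanSpace ℝ (Fin N) → ℝ)
    (hψ : ∀ x, ψ x = g x + ⟪v, x - xk⟫)
    (xplus : EuclideanSpace ℝ (Fin N)) (hxplus : ψ xplus < ψ xk)
    (d : EuclideanSpace ℝ (Fin n)) (hd : d = P (xplus - xk)) :
    ⟪gradient f yk, d⟫ ≤ ψ xplus - ψ xk ∧ ψ xplus - ψ xk < 0 := by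
  set u : EuclideanSpace ℝ (Fin N) := xplus - xk with hu
  -- key convexity inequality: ⟪∇g xk, u⟫ ≤ g xplus - g xk
  have hgrad : HasGradientAt g (gradient g xk) xk := (hg xk).hasGradientAt
  have hcurve : ∀ t : ℝ, HasDerivAt (fun t : ℝ => xk + t • u) u t := by
    intro t
    simpa using ((hasDerivAt_id t).smul_const u).const_add xk
  have hφ : HasDerivAt (fun t : ℝ => g (xk + t • u)) ⟪gradient g xk, u⟫ 0 := by
    have h1 : HasFDerivAt g ((InnerProductSpace.toDual ℝ _) (gradient g xk))
        (xk + (0:ℝ) • u) := by simpa using hgrad.hasFDerivAt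
    have h2 := h1.comp_hasDerivAt 0 (hcurve 0)
    simp [InnerProductSpace.toDual_apply_apply] at h2 ⊢
    exact h2
  have hφconv : ConvexOn ℝ Set.univ (fun t : ℝ => g (xk + t • u)) := by
    refine ⟨convex_univ, ?_⟩
    intro x _ y _ a b ha hb hab
    have hpt : xk + (a • x + b • y) • u = a • (xk + x • u) + b • (xk + y • u) := by
      rw [show xk + (a • x + b • y) • u = (a + b) • xk + (a • x + b • y) • u by
        rw [hab, one_smul]]
      simp only [smul_eq_mul]
      module
    simp only []
    rw [hpt]
    exact hgconv.2 (Set.mem_univ _) (Set.mem_univ _) ha hb hab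
  have hkey : ⟪gradient g xk, u⟫ ≤ g xplus - g xk := by
    have := hφconv.le_slope_of_hasDerivAt (Set.mem_univ (0:ℝ)) (Set.mem_univ (1:ℝ))
      one_pos hφ
    simpa [slope, hu] using this
  have hpsi : ψ xplus - ψ xk = g xplus - g xk + ⟪v, u⟫ := by
    simp [hψ, hu]
    ring
  have hinner : ⟪gradient f yk, d⟫ = ⟪v, u⟫ + ⟪gradient g xk, u⟫ := by
    rw [hd, ← ContinuousLinearMap.adjoint_inner_left, ← hR, hv, inner_sub_left]
    ring
  refine ⟨?_, by linarith⟩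
  rw [hinner, hpsi]
  linarith
end

section
/- Lemma 2.1 (minimizer form): if g is convex, R = Pᵀ, and x_* is a global minimizer of ψ over ℝ^N, then the direction d = P(x_* − x_k) satisfies ⟨∇f(y_k), d⟩ ≤ ψ(x_*) − ψ(x_k) ≤ 0. -/
open scoped RealInnerProductSpace

open Filter Topology in
lemma convexOn_inner_gradient_le
    {E : Type*} [NormedAddCommGroup E] [InnerProductSpace ℝ E] [CompleteSpace E]
    {g : E → ℝ} (hg : Differentiable ℝ g) (hc : ConvexOn ℝ Set.univ g)
    (x y : E) : ⟪gradient g x, y - x⟫ ≤ g y - g x := by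
  set h : E := y - x with hh
  set φ : ℝ → ℝ := fun t => g (x + t • h) with hφ
  have hline : HasDerivAt (fun t : ℝ => x + t • h) h 0 := by
    simpa using ((hasDerivAt_id (0 : ℝ)).smul_const h).const_add x
  have hgrad : HasFDerivAt g (InnerProductSpace.toDual ℝ E (gradient g x)) x :=
    (hg x).hasGradientAt.hasFDerivAt
  have hderiv : HasDerivAt φ ⟪gradient g x, h⟫ 0 := by
    have hgrad' : HasFDerivAt g ((InnerProductSpace.toDual ℝ E) (gradient g x)) (x + (0:ℝ) • h) := by simpa using hgrad
    have := hgrad'.comp_hasDerivAt (0 : ℝ) hline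
    simpa [φ, InnerProductSpace.toDual_apply_apply, Function.comp_def] using this
  have htend : Tendsto (slope φ 0) (𝓝[>] (0 : ℝ)) (𝓝 ⟪gradient g x, h⟫) :=
    (hasDerivAt_iff_tendsto_slope.mp hderiv).mono_left
      (nhdsWithin_mono _ (by intro t ht; exact ne_of_gt ht))
  have hbound : ∀ᶠ t in 𝓝[>] (0 : ℝ), slope φ 0 t ≤ g y - g x := by
    filter_upwards [Ioc_mem_nhdsGT_of_mem (Set.left_mem_Ico.mpr one_pos)] with t ht
    have ht0 : 0 < t := ht.1
    have hconv := hc.2 (Set.mem_univ x) (Set.mem_univ y)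
      (by linarith [ht.2] : (0:ℝ) ≤ 1 - t) (le_of_lt ht0) (by ring)
    have hφt : φ t ≤ (1 - t) * g x + t * g y := by
      have : x + t • h = (1 - t) • x + t • y := by
        simp [hh, smul_sub, sub_smul]; abel
      simpa [φ, this, smul_eq_mul] using hconv
    have hφ0 : φ 0 = g x := by simp [φ]
    have : (φ t - φ 0) / (t - 0) ≤ g y - g x := by
      rw [sub_zero, div_le_iff₀ ht0]
      nlinarith [hφt, hφ0]
    simpa [slope_def_field] using this
  exact le_of_tendsto htend hbound

/-- Lemma 2.1 (minimizer form): if `g` is convex, `R = Pᵀ`, and `x_*` is a global minimizer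
of `ψ`, then the direction `d = P(x_* − x_k)` satisfies
`⟪∇f(y_k), d⟫ ≤ ψ(x_*) − ψ(x_k) ≤ 0`. -/
theorem coarse_correction_descent_minimizer
    (n N : ℕ) (hn : 0 < n) (hN : 0 < N)
    (f : EuclideanSpace ℝ (Fin n) → ℝ) (g : EuclideanSpace ℝ (Fin N) → ℝ)
    (hf : Differentiable ℝ f) (hg : Differentiable ℝ g)
    (hgconv : ConvexOn ℝ Set.univ g)
    (P : EuclideanSpace ℝ (Fin N) →L[ℝ] EuclideanSpace ℝ (Fin n))
    (R : EuclideanSpace ℝ (Fin n) →L[ℝ] EuclideanSpace ℝ (Fin N))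
    (hR : R = ContinuousLinearMap.adjoint P)
    (yk : EuclideanSpace ℝ (Fin n))
    (xk : EuclideanSpace ℝ (Fin N)) (hxk : xk = R yk)
    (v : EuclideanSpace ℝ (Fin N)) (hv : v = R (gradient f yk) - gradient g xk)
    (ψ : EuclideanSpace ℝ (Fin N) → ℝ)
    (hψ : ∀ x, ψ x = g x + ⟪v, x - xk⟫)
    (xstar : EuclideanSpace ℝ (Fin N)) (hxstar : ∀ x, ψ xstar ≤ ψ x)
    (d : EuclideanSpace ℝ (Fin n)) (hd : d = P (xstar - xk)) :
    ⟪gradient f yk, d⟫ ≤ ψ xstar - ψ xk ∧ ψ xstar - ψ xk ≤ 0 := by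
  constructor
  · have hgrad := convexOn_inner_gradient_le hg hgconv xk xstar
    have hadj : ⟪R (gradient f yk), xstar - xk⟫ = ⟪gradient f yk, d⟫ := by
      rw [hR, hd, ContinuousLinearMap.adjoint_inner_left]
    have hψdiff : ψ xstar - ψ xk = g xstar - g xk + ⟪v, xstar - xk⟫ := by
      simp [hψ]
      ring
    rw [hψdiff, hv]
    have : ⟪R (gradient f yk) - gradient g xk, xstar - xk⟫
        = ⟪gradient f yk, d⟫ - ⟪gradient g xk, xstar - xk⟫ := by
      rw [inner_sub_left, hadj]
    rw [this]
    linarith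
  · have := hxstar xk
    linarith
end

section
/- Feasibility under prolongation (Lemma 2.2): if l ≤ y_k ≤ u componentwise, then for every x ∈ ℝ^N with l_{k,P} ≤ x ≤ u_{k,P} componentwise, one has l ≤ y_k + P(x − x_k) ≤ u componentwise. -/
/-- Feasibility under prolongation (Lemma 2.2): if `l ≤ y_k ≤ u` componentwise, then for
every `x` with `l_{k,P} ≤ x ≤ u_{k,P}` componentwise, one has
`l ≤ y_k + P(x − x_k) ≤ u` componentwise. -/
theorem feasibility_under_prolongation
    (n N : ℕ) (hn : 0 < n) (hN : 0 < N)
    (P : Matrix (Fin n) (Fin N) ℝ)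
    (hne : ∀ j, (Finset.filter (fun i => P i j ≠ 0) Finset.univ).Nonempty)
    (Pinf : ℝ)
    (hPinf : Pinf = Finset.univ.sup' (⟨⟨0, hn⟩, Finset.mem_univ _⟩ : (Finset.univ : Finset (Fin n)).Nonempty)
      (fun i => ∑ j, |P i j|))
    (hPpos : 0 < Pinf)
    (l u yk : Fin n → ℝ) (hly : ∀ i, l i ≤ yk i) (hyu : ∀ i, yk i ≤ u i)
    (xk : Fin N → ℝ)
    (lkP ukP : Fin N → ℝ)
    (hlkP : ∀ j, lkP j = xk j + (1 / Pinf) *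
      ((Finset.filter (fun i => P i j ≠ 0) Finset.univ).sup' (hne j)
        (fun i => if 0 < P i j then l i - yk i else yk i - u i)))
    (hukP : ∀ j, ukP j = xk j + (1 / Pinf) *
      ((Finset.filter (fun i => P i j ≠ 0) Finset.univ).inf' (hne j)
        (fun i => if 0 < P i j then u i - yk i else yk i - l i))) :
    ∀ x : Fin N → ℝ, (∀ j, lkP j ≤ x j ∧ x j ≤ ukP j) →
      ∀ i, l i ≤ yk i + ∑ j, P i j * (x j - xk j) ∧
        yk i + ∑ j, P i j * (x j - xk j) ≤ u i := by
  intro x hx i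
  have hS : (∑ j, |P i j|) ≤ Pinf := by
    rw [hPinf]
    exact Finset.le_sup' (fun i => ∑ j, |P i j|) (Finset.mem_univ i)
  -- bounds on x j - xk j coming from the box constraints
  have hxlow : ∀ j, ∀ i' ∈ Finset.filter (fun i => P i j ≠ 0) Finset.univ,
      (if 0 < P i' j then l i' - yk i' else yk i' - u i') ≤ (x j - xk j) * Pinf := by
    intro j i' hi'
    have h1 := (hx j).1
    rw [hlkP j] at h1
    have h2 := Finset.le_sup' (fun i => if 0 < P i j then l i - yk i else yk i - u i) hi'
    have h3 : (1 / Pinf) * ((Finset.filter (fun i => P i j ≠ 0) Finset.univ).sup' (hne j)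
        (fun i => if 0 < P i j then l i - yk i else yk i - u i)) ≤ x j - xk j := by linarith
    have h4 := mul_le_mul_of_nonneg_right h3 hPpos.le
    rw [mul_assoc] at h4
    calc (if 0 < P i' j then l i' - yk i' else yk i' - u i')
        ≤ (Finset.filter (fun i => P i j ≠ 0) Finset.univ).sup' (hne j)
          (fun i => if 0 < P i j then l i - yk i else yk i - u i) := h2
      _ = 1 / Pinf * ((Finset.filter (fun i => P i j ≠ 0) Finset.univ).sup' (hne j)
          (fun i => if 0 < P i j then l i - yk i else yk i - u i) * Pinf) := by
            field_simp
      _ ≤ (x j - xk j) * Pinf := h4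
  have hxup : ∀ j, ∀ i' ∈ Finset.filter (fun i => P i j ≠ 0) Finset.univ,
      (x j - xk j) * Pinf ≤ (if 0 < P i' j then u i' - yk i' else yk i' - l i') := by
    intro j i' hi'
    have h1 := (hx j).2
    rw [hukP j] at h1
    have h2 := Finset.inf'_le (fun i => if 0 < P i j then u i - yk i else yk i - l i) hi'
    have h3 : x j - xk j ≤ (1 / Pinf) * ((Finset.filter (fun i => P i j ≠ 0) Finset.univ).inf' (hne j)
        (fun i => if 0 < P i j then u i - yk i else yk i - l i)) := by linarith
    have h4 := mul_le_mul_of_nonneg_right h3 hPpos.le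
    rw [mul_assoc] at h4
    calc (x j - xk j) * Pinf
        ≤ 1 / Pinf * ((Finset.filter (fun i => P i j ≠ 0) Finset.univ).inf' (hne j)
          (fun i => if 0 < P i j then u i - yk i else yk i - l i) * Pinf) := h4
      _ = (Finset.filter (fun i => P i j ≠ 0) Finset.univ).inf' (hne j)
          (fun i => if 0 < P i j then u i - yk i else yk i - l i) := by field_simp
      _ ≤ (if 0 < P i' j then u i' - yk i' else yk i' - l i') := h2
  -- per-term bounds
  have hterm : ∀ j, |P i j| * (l i - yk i) / Pinf ≤ P i j * (x j - xk j) ∧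
      P i j * (x j - xk j) ≤ |P i j| * (u i - yk i) / Pinf := by
    intro j
    rcases lt_trichotomy (P i j) 0 with hneg | hzero | hpos
    · have hmem : i ∈ Finset.filter (fun i => P i j ≠ 0) Finset.univ :=
        Finset.mem_filter.mpr ⟨Finset.mem_univ i, ne_of_lt hneg⟩
      have h1 := hxlow j i hmem
      have h2 := hxup j i hmem
      rw [if_neg (not_lt.mpr hneg.le)] at h1 h2
      have habs : |P i j| = -P i j := abs_of_neg hneg
      constructor
      · rw [habs, div_le_iff₀ hPpos]
        nlinarith [mul_le_mul_of_nonpos_left h2 hneg.le]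
      · rw [habs, le_div_iff₀ hPpos]
        nlinarith [mul_le_mul_of_nonpos_left h1 hneg.le]
    · simp [hzero]
    · have hmem : i ∈ Finset.filter (fun i => P i j ≠ 0) Finset.univ :=
        Finset.mem_filter.mpr ⟨Finset.mem_univ i, ne_of_gt hpos⟩
      have h1 := hxlow j i hmem
      have h2 := hxup j i hmem
      rw [if_pos hpos] at h1 h2
      have habs : |P i j| = P i j := abs_of_pos hpos
      constructor
      · rw [habs, div_le_iff₀ hPpos]
        nlinarith [mul_le_mul_of_nonneg_left h1 hpos.le]
      · rw [habs, le_div_iff₀ hPpos]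
        nlinarith [mul_le_mul_of_nonneg_left h2 hpos.le]
  have hsumlow : (∑ j, |P i j|) * (l i - yk i) / Pinf ≤ ∑ j, P i j * (x j - xk j) := by
    rw [Finset.sum_mul, Finset.sum_div]
    exact Finset.sum_le_sum fun j _ => (hterm j).1
  have hsumup : (∑ j, P i j * (x j - xk j)) ≤ (∑ j, |P i j|) * (u i - yk i) / Pinf := by
    rw [Finset.sum_mul, Finset.sum_div]
    exact Finset.sum_le_sum fun j _ => (hterm j).2
  have hSnn : 0 ≤ ∑ j, |P i j| := Finset.sum_nonneg fun j _ => abs_nonneg _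
  constructor
  · have : (l i - yk i) ≤ (∑ j, |P i j|) * (l i - yk i) / Pinf := by
      rw [le_div_iff₀ hPpos]
      nlinarith [hly i]
    linarith
  · have : (∑ j, |P i j|) * (u i - yk i) / Pinf ≤ u i - yk i := by
      rw [div_le_iff₀ hPpos]
      nlinarith [hyu i]
    linarith
end

section
/- Armijo interval (Lemma 3.1, first part): let f : ℝ^n → ℝ be differentiable with M-Lipschitz gradient (M > 0), let ρ₁ ∈ (0, 1/2), let y ∈ ℝ^n, and let d ∈ ℝ^n be a descent direction for f at y, i.e. ⟨∇f(y), d⟩ < 0, with d ≠ 0. Then every step size α ∈ [0, α̂] with α̂ = 2(ρ₁ − 1)⟨∇f(y), d⟩ / (M‖d‖²) satisfies the Armijo condition f(y + α d) ≤ f(y) + ρ₁ α ⟨∇f(y), d⟩. -/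
open scoped RealInnerProductSpace

/-- Armijo interval (Lemma 3.1, first part): if `∇f` is `M`-Lipschitz, `ρ₁ ∈ (0, 1/2)`,
and `d` is a descent direction at `y`, then every step size
`α ∈ [0, α̂]` with `α̂ = 2(ρ₁ − 1)⟪∇f(y), d⟫ / (M‖d‖²)` satisfies the Armijo condition. -/
theorem armijo_interval
    (n : ℕ) (hn : 0 < n)
    (f : EuclideanSpace ℝ (Fin n) → ℝ) (hf : Differentiable ℝ f)
    (M : ℝ) (hM : 0 < M)
    (hLip : ∀ x z, ‖gradient f x - gradient f z‖ ≤ M * ‖x - z‖)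
    (ρ₁ : ℝ) (hρ₁ : ρ₁ ∈ Set.Ioo (0 : ℝ) (1/2))
    (y d : EuclideanSpace ℝ (Fin n)) (hd : d ≠ 0)
    (hdesc : ⟪gradient f y, d⟫ < 0)
    (α : ℝ) (hα : α ∈ Set.Icc 0 (2 * (ρ₁ - 1) * ⟪gradient f y, d⟫ / (M * ‖d‖^2))) :
    f (y + α • d) ≤ f y + ρ₁ * α * ⟪gradient f y, d⟫ := by
  obtain ⟨hα0, hαub⟩ := hα
  set gy := ⟪gradient f y, d⟫ with hgy
  -- derivative of t ↦ f (y + t • d)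
  have hderiv : ∀ t : ℝ, HasDerivAt (fun t : ℝ => f (y + t • d))
      ⟪gradient f (y + t • d), d⟫ t := by
    intro t
    have h1 : HasDerivAt (fun t : ℝ => y + t • d) d t := by
      simpa using ((hasDerivAt_id t).smul_const d).const_add y
    have h2 := (hf (y + t • d)).hasGradientAt.hasFDerivAt
    have := h2.comp_hasDerivAt t h1
    exact this
  -- descent lemma
  have descent : f (y + α • d) ≤ f y + α * gy + M * ‖d‖^2 * α^2 / 2 := by
    set φ : ℝ → ℝ := fun t => f (y + t • d) - t * gy - M * ‖d‖^2 * t^2 / 2 with hφ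
    have hφd : ∀ t : ℝ, HasDerivAt φ
        (⟪gradient f (y + t • d), d⟫ - gy - M * ‖d‖^2 * t) t := by
      intro t
      have := ((hderiv t).sub ((hasDerivAt_id t).mul_const gy)).sub
        (((hasDerivAt_id t).pow 2).const_mul (M * ‖d‖^2) |>.div_const 2)
      simp only [id] at this
      have e : (⟪gradient f (y + t • d), d⟫ - gy - M * ‖d‖^2 * t) = (⟪gradient f (y + t • d), d⟫ - 1 * gy - M * ‖d‖ ^ 2 * ((2 : ℕ) * t ^ (2 - 1) * 1) / 2) := by
        norm_num; ring
      rw [e]; exact this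
    have hanti : AntitoneOn φ (Set.Icc 0 α) := by
      apply antitoneOn_of_deriv_nonpos (convex_Icc 0 α)
      · exact Continuous.continuousOn (by
          exact continuous_iff_continuousAt.2 fun t => (hφd t).continuousAt)
      · intro t ht
        exact ((hφd t).differentiableAt).differentiableWithinAt
      · intro t ht
        rw [interior_Icc] at ht
        rw [(hφd t).deriv]
        have h1 : ⟪gradient f (y + t • d), d⟫ - gy
            = ⟪gradient f (y + t • d) - gradient f y, d⟫ := by
          rw [inner_sub_left]
        have h2 : ⟪gradient f (y + t • d) - gradient f y, d⟫ ≤ M * ‖d‖^2 * t := by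
          calc ⟪gradient f (y + t • d) - gradient f y, d⟫
              ≤ ‖gradient f (y + t • d) - gradient f y‖ * ‖d‖ :=
                real_inner_le_norm _ _
            _ ≤ (M * ‖y + t • d - y‖) * ‖d‖ := by
                gcongr; exact hLip _ _
            _ = M * ‖d‖^2 * t := by
                have : y + t • d - y = t • d := by abel
                rw [this, norm_smul, Real.norm_eq_abs, abs_of_pos ht.1]
                ring
        rw [h1]; linarith
    have := hanti (Set.left_mem_Icc.2 hα0) (Set.right_mem_Icc.2 hα0) hα0
    simp only [hφ] at this
    simp only [zero_smul, add_zero, zero_mul, zero_pow, mul_zero] at this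
    linarith [this]
  -- conclude
  rcases eq_or_lt_of_le hα0 with h0 | hpos
  · simp [← h0]
  · have hdnorm : 0 < ‖d‖^2 := pow_pos (norm_pos_iff.mpr hd) 2
    have hMd : 0 < M * ‖d‖^2 := mul_pos hM hdnorm
    have key : α * (M * ‖d‖^2) ≤ 2 * (ρ₁ - 1) * gy := by
      rw [le_div_iff₀ hMd] at hαub
      linarith
    nlinarith [descent, mul_le_mul_of_nonneg_left key (le_of_lt hpos)]
end

section
/- Descent strength of the exact coarse step (inequality (A.1) in the proof of Lemma 3.2): suppose g is convex and differentiable, the coarse model ψ is m_g-strongly convex with M_g-Lipschitz gradient (0 < m_g ≤ M_g), R = Pᵀ, and x_* is the global minimizer of ψ over ℝ^N. Then the direction d = P(x_* − x_k) satisfies ⟨∇f(y_k), d⟩ ≤ −(m_g / (2 M_g²)) ‖∇ψ(x_k)‖². -/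
open scoped RealInnerProductSpace

/-- Subgradient inequality for a convex differentiable function. -/
lemma aux_subgrad {E : Type*} [NormedAddCommGroup E] [InnerProductSpace ℝ E]
    [CompleteSpace E] (φ : E → ℝ) (hconv : ConvexOn ℝ Set.univ φ) (x y : E) (φ' : E)
    (hdiff : HasGradientAt φ φ' x) :
    ⟪φ', y - x⟫ ≤ φ y - φ x := by
  set u := y - x with hu
  have hφ' : HasFDerivAt φ (InnerProductSpace.toDual ℝ E φ') x :=
    hasGradientAt_iff_hasFDerivAt.mp hdiff
  have hc : HasDerivAt (fun t : ℝ => x + t • u) u 0 := by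
    simpa using ((hasDerivAt_id (0 : ℝ)).smul_const u).const_add x
  have hh : HasDerivAt (fun t : ℝ => φ (x + t • u)) ⟪φ', u⟫ 0 := by
    have h0 : HasFDerivAt φ (InnerProductSpace.toDual ℝ E φ') ((fun t : ℝ => x + t • u) 0) := by
      simpa using hφ'
    have := h0.comp_hasDerivAt 0 hc
    simp only [InnerProductSpace.toDual_apply_apply] at this
    exact this
  have hconv1 : ConvexOn ℝ Set.univ (fun t : ℝ => φ (x + t • u)) := by
    have h := hconv.comp_affineMap (AffineMap.lineMap x y)
    have he : (fun t : ℝ => φ (x + t • u)) = (φ ∘ AffineMap.lineMap x y) := by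
      funext t
      simp [AffineMap.lineMap_apply, hu, add_comm]
    rw [he]
    simpa using h
  have hs := hconv1.le_slope_of_hasDerivAt (Set.mem_univ (0:ℝ)) (Set.mem_univ (1:ℝ))
    one_pos hh
  have h1 : x + (1:ℝ) • u = y := by simp [hu]
  have h0 : x + (0:ℝ) • u = x := by simp
  rw [slope_def_field] at hs
  rw [h1, h0] at hs
  simpa using hs

/-- Descent strength of the exact coarse step (inequality (A.1) in the proof of Lemma 3.2):
if `g` is convex, the coarse model `ψ` is `m_g`-strongly convex with `M_g`-Lipschitz
gradient, `R = Pᵀ`, and `x_*` is the global minimizer of `ψ`, then the direction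
`d = P(x_* − x_k)` satisfies `⟪∇f(y_k), d⟫ ≤ −(m_g / (2 M_g²)) ‖∇ψ(x_k)‖²`. -/
theorem coarse_step_descent_strength
    (n N : ℕ) (hn : 0 < n) (hN : 0 < N)
    (f : EuclideanSpace ℝ (Fin n) → ℝ) (g : EuclideanSpace ℝ (Fin N) → ℝ)
    (hf : Differentiable ℝ f) (hg : Differentiable ℝ g)
    (hgconv : ConvexOn ℝ Set.univ g)
    (P : EuclideanSpace ℝ (Fin N) →L[ℝ] EuclideanSpace ℝ (Fin n))
    (R : EuclideanSpace ℝ (Fin n) →L[ℝ] EuclideanSpace ℝ (Fin N))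
    (hR : R = ContinuousLinearMap.adjoint P)
    (yk : EuclideanSpace ℝ (Fin n))
    (xk : EuclideanSpace ℝ (Fin N)) (hxk : xk = R yk)
    (v : EuclideanSpace ℝ (Fin N)) (hv : v = R (gradient f yk) - gradient g xk)
    (ψ : EuclideanSpace ℝ (Fin N) → ℝ)
    (hψ : ∀ x, ψ x = g x + ⟪v, x - xk⟫)
    (mg Mg : ℝ) (hmg : 0 < mg) (hmgMg : mg ≤ Mg)
    (hstrong : ConvexOn ℝ Set.univ (fun x => ψ x - mg / 2 * ‖x‖^2))
    (hLipψ : ∀ x z, ‖gradient ψ x - gradient ψ z‖ ≤ Mg * ‖x - z‖)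
    (xstar : EuclideanSpace ℝ (Fin N)) (hxstar : ∀ x, ψ xstar ≤ ψ x)
    (d : EuclideanSpace ℝ (Fin n)) (hd : d = P (xstar - xk)) :
    ⟪gradient f yk, d⟫ ≤ -(mg / (2 * Mg^2)) * ‖gradient ψ xk‖^2 := by
  -- gradient of ψ at any point
  have hψgrad : ∀ x : EuclideanSpace ℝ (Fin N), HasGradientAt ψ (gradient g x + v) x := by
    intro x
    rw [hasGradientAt_iff_hasFDerivAt]
    have hg' : HasFDerivAt g
        (InnerProductSpace.toDual ℝ (EuclideanSpace ℝ (Fin N)) (gradient g x)) x :=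
      hasGradientAt_iff_hasFDerivAt.mp (hg x).hasGradientAt
    have hv' : HasFDerivAt (fun z : EuclideanSpace ℝ (Fin N) => ⟪v, z - xk⟫)
        (InnerProductSpace.toDual ℝ (EuclideanSpace ℝ (Fin N)) v) x := by
      have h1 : HasFDerivAt (fun z : EuclideanSpace ℝ (Fin N) =>
          (InnerProductSpace.toDual ℝ (EuclideanSpace ℝ (Fin N)) v) z
          - (InnerProductSpace.toDual ℝ (EuclideanSpace ℝ (Fin N)) v) xk)
          (InnerProductSpace.toDual ℝ (EuclideanSpace ℝ (Fin N)) v) x :=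
        ((InnerProductSpace.toDual ℝ (EuclideanSpace ℝ (Fin N)) v).hasFDerivAt).sub_const _
      have he : (fun z : EuclideanSpace ℝ (Fin N) => ⟪v, z - xk⟫) =
          fun z : EuclideanSpace ℝ (Fin N) =>
          (InnerProductSpace.toDual ℝ (EuclideanSpace ℝ (Fin N)) v) z
          - (InnerProductSpace.toDual ℝ (EuclideanSpace ℝ (Fin N)) v) xk := by
        funext z; simp [inner_sub_right]
      rw [he]; exact h1
    have hsum := hg'.add hv'
    have he : ψ = fun z : EuclideanSpace ℝ (Fin N) => g z + ⟪v, z - xk⟫ := funext hψ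
    rw [he, map_add]
    exact hsum
  have hψdiff : Differentiable ℝ ψ := fun x => (hψgrad x).differentiableAt
  have hgradψ : ∀ x : EuclideanSpace ℝ (Fin N), gradient ψ x = gradient g x + v :=
    fun x => (hψgrad x).gradient
  -- gradient of ψ at the minimizer is zero
  have hgradstar : gradient ψ xstar = 0 := by
    have hmin : IsLocalMin ψ xstar := Filter.Eventually.of_forall hxstar
    have hfd : fderiv ℝ ψ xstar = 0 := hmin.fderiv_eq_zero
    simp [gradient, hfd]
  -- gradient of ψ at xk equals R (∇f yk)
  have hgradxk : gradient ψ xk = R (gradient f yk) := by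
    rw [hgradψ xk, hv]; abel
  set u : EuclideanSpace ℝ (Fin N) := xstar - xk with hudef
  -- strong convexity inequality
  have hφgrad : HasGradientAt (fun x : EuclideanSpace ℝ (Fin N) => ψ x - mg / 2 * ‖x‖^2)
      (gradient ψ xk - mg • xk) xk := by
    rw [hasGradientAt_iff_hasFDerivAt]
    have h1 : HasFDerivAt ψ
        (InnerProductSpace.toDual ℝ (EuclideanSpace ℝ (Fin N)) (gradient ψ xk)) xk :=
      hasGradientAt_iff_hasFDerivAt.mp (hψdiff xk).hasGradientAt
    have h2 : HasFDerivAt (fun x : EuclideanSpace ℝ (Fin N) => ‖x‖^2)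
        (2 • (innerSL ℝ xk)) xk :=
      (hasStrictFDerivAt_norm_sq xk).hasFDerivAt
    have h3 := h1.sub (h2.const_mul (mg / 2))
    have he : (InnerProductSpace.toDual ℝ (EuclideanSpace ℝ (Fin N)))
        (gradient ψ xk - mg • xk)
        = InnerProductSpace.toDual ℝ (EuclideanSpace ℝ (Fin N)) (gradient ψ xk)
          - (mg / 2) • (2 • (innerSL ℝ xk)) := by
      apply ContinuousLinearMap.ext
      intro z
      simp only [InnerProductSpace.toDual_apply_apply, ContinuousLinearMap.sub_apply,
        ContinuousLinearMap.smul_apply, innerSL_apply_apply, inner_sub_left, real_inner_smul_left,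
        smul_eq_mul]
      ring
    rw [he]
    exact h3
  have hsub := aux_subgrad _ hstrong xk xstar _ hφgrad
  have hinner_sub : ⟪gradient ψ xk - mg • xk, u⟫
      = ⟪gradient ψ xk, u⟫ - mg * ⟪xk, u⟫ := by
    rw [inner_sub_left, real_inner_smul_left]
  have hnorm_exp : ‖xstar‖^2 = ‖xk‖^2 + 2 * ⟪xk, u⟫ + ‖u‖^2 := by
    have hx : xstar = xk + u := by rw [hudef]; abel
    rw [hx]
    exact norm_add_sq_real xk u
  have hminle : ψ xstar ≤ ψ xk := hxstar xk
  have hsub' : ⟪gradient ψ xk, u⟫ - mg * ⟪xk, u⟫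
      ≤ ψ xstar - mg / 2 * ‖xstar‖^2 - (ψ xk - mg / 2 * ‖xk‖^2) := by
    rw [← hinner_sub]
    exact hsub
  have key : ⟪gradient ψ xk, u⟫ ≤ -(mg / 2) * ‖u‖^2 := by
    rw [hnorm_exp] at hsub'
    set a := ⟪gradient ψ xk, u⟫
    set b := ⟪xk, u⟫
    linarith [hsub', hminle]
  -- Lipschitz bound
  have hlip : ‖gradient ψ xk‖ ≤ Mg * ‖u‖ := by
    have hl := hLipψ xk xstar
    rw [hgradstar] at hl
    simpa [hudef, norm_sub_rev] using hl
  -- rewrite the LHS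
  have hMg : 0 < Mg := lt_of_lt_of_le hmg hmgMg
  have hLHS : ⟪gradient f yk, d⟫ = ⟪gradient ψ xk, u⟫ := by
    rw [hd, hgradxk, hR]
    rw [← ContinuousLinearMap.adjoint_inner_left]
  rw [hLHS]
  have hGn : (0:ℝ) ≤ ‖gradient ψ xk‖ := norm_nonneg _
  have hUn : (0:ℝ) ≤ ‖u‖ := norm_nonneg _
  have hsq : ‖gradient ψ xk‖^2 ≤ Mg^2 * ‖u‖^2 := by
    have h := pow_le_pow_left₀ hGn hlip 2
    rwa [mul_pow] at h
  have hmul : mg * ‖gradient ψ xk‖^2 ≤ mg * (Mg^2 * ‖u‖^2) :=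
    mul_le_mul_of_nonneg_left hsq (le_of_lt hmg)
  calc ⟪gradient ψ xk, u⟫ ≤ -(mg / 2) * ‖u‖^2 := key
    _ ≤ -(mg / (2 * Mg^2)) * ‖gradient ψ xk‖^2 := by
        rw [neg_mul, neg_mul, neg_le_neg_iff]
        rw [div_mul_eq_mul_div, div_le_iff₀ (by positivity)]
        linarith [hmul]
end

section
/- Lipschitz constant of the gradient of the regularized tomography objective: let A be an m × n real matrix, b ∈ ℝ^m, D a p × n real matrix, λ > 0, ρ > 0, and define f : ℝ^n → ℝ by f(y) = (1/2)‖Ay − b‖² + λ Σ_{i=1}^p (√(ρ² + (Dy)_i²) − ρ). Then f is differentiable and ∇f is Lipschitz continuous with constant ‖A‖² + (λ/ρ)‖D‖², where ‖A‖ and ‖D‖ denote operator (spectral) norms; in particular, if ‖D‖² ≤ 8, then ∇f is Lipschitz with constant ‖A‖² + 8λ/ρ. -/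
open Real in
private lemma tog_hasDerivAt_phi {ρ : ℝ} (hρ : 0 < ρ) (t : ℝ) :
    HasDerivAt (fun s => Real.sqrt (ρ^2 + s^2) - ρ) (t / Real.sqrt (ρ^2 + t^2)) t := by
  have hu : (0:ℝ) < ρ^2 + t^2 := by positivity
  have h1 : HasDerivAt (fun s : ℝ => ρ^2 + s^2) (2*t) t := by
    simpa using ((hasDerivAt_pow 2 t).const_add (ρ^2))
  have h2 := (h1.sqrt hu.ne')
  have hs : Real.sqrt (ρ^2 + t^2) ≠ 0 := (Real.sqrt_pos.mpr hu).ne'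
  have : (2*t) / (2 * Real.sqrt (ρ^2 + t^2)) = t / Real.sqrt (ρ^2 + t^2) := by
    field_simp
  simpa [this] using h2.sub_const ρ

private lemma tog_hasDerivAt_psi {ρ : ℝ} (hρ : 0 < ρ) (t : ℝ) :
    HasDerivAt (fun s => s / Real.sqrt (ρ^2 + s^2))
      (ρ^2 / ((ρ^2 + t^2) * Real.sqrt (ρ^2 + t^2))) t := by
  have hu : (0:ℝ) < ρ^2 + t^2 := by positivity
  have hs : (0:ℝ) < Real.sqrt (ρ^2 + t^2) := Real.sqrt_pos.mpr hu
  have h1 : HasDerivAt (fun s : ℝ => ρ^2 + s^2) (2*t) t := by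
    simpa using ((hasDerivAt_pow 2 t).const_add (ρ^2))
  have h2 := h1.sqrt hu.ne'
  have h3 := (hasDerivAt_id t).div h2 hs.ne'
  refine h3.congr_deriv ?_
  symm
  simp only [id]
  have hss : Real.sqrt (ρ^2 + t^2) ^ 2 = ρ^2 + t^2 := Real.sq_sqrt hu.le
  field_simp
  linear_combination (-t^2) * hss

private lemma tog_psi_lipschitz {ρ : ℝ} (hρ : 0 < ρ) (s t : ℝ) :
    |t / Real.sqrt (ρ^2 + t^2) - s / Real.sqrt (ρ^2 + s^2)| ≤ (1/ρ) * |t - s| := by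
  have hdiff : Differentiable ℝ (fun s : ℝ => s / Real.sqrt (ρ^2 + s^2)) :=
    fun x => (tog_hasDerivAt_psi hρ x).differentiableAt
  have hC : (0:ℝ) ≤ 1/ρ := by positivity
  have hlip : LipschitzWith (Real.toNNReal (1/ρ)) (fun s : ℝ => s / Real.sqrt (ρ^2 + s^2)) := by
    apply lipschitzWith_of_nnnorm_deriv_le hdiff
    intro x
    rw [(tog_hasDerivAt_psi hρ x).deriv, ← NNReal.coe_le_coe, coe_nnnorm, Real.norm_eq_abs, Real.coe_toNNReal _ hC]
    have hu : (0:ℝ) < ρ^2 + x^2 := by positivity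
    have hs : (0:ℝ) < Real.sqrt (ρ^2 + x^2) := Real.sqrt_pos.mpr hu
    have hnn : (0:ℝ) ≤ ρ^2 / ((ρ^2 + x^2) * Real.sqrt (ρ^2 + x^2)) := by positivity
    rw [abs_of_nonneg hnn]
    show _ ≤ (1/ρ : ℝ)
    rw [div_le_div_iff₀ (by positivity) hρ]
    have h1 : ρ ≤ Real.sqrt (ρ^2 + x^2) := by
      exact (Real.le_sqrt' hρ).mpr (by nlinarith)
    have h2 : ρ^2 ≤ ρ^2 + x^2 := by nlinarith
    nlinarith [hs, hρ]
  have := hlip.dist_le_mul t s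
  rw [Real.coe_toNNReal _ hC] at this
  simpa [Real.dist_eq] using this


set_option maxHeartbeats 1000000 in
/-- Lipschitz constant of the gradient of the regularized tomography objective:
for `f(y) = (1/2)‖Ay − b‖² + λ Σᵢ (√(ρ² + (Dy)ᵢ²) − ρ)`, the gradient `∇f` is Lipschitz
with constant `‖A‖² + (λ/ρ)‖D‖²` (operator/spectral norms); in particular, if `‖D‖² ≤ 8`,
then `∇f` is Lipschitz with constant `‖A‖² + 8λ/ρ`. -/
theorem tomography_objective_gradient_lipschitz
    (m n p : ℕ) (hm : 0 < m) (hn : 0 < n) (hp : 0 < p)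
    (A : Matrix (Fin m) (Fin n) ℝ) (b : Fin m → ℝ)
    (D : Matrix (Fin p) (Fin n) ℝ)
    (lam ρ : ℝ) (hlam : 0 < lam) (hρ : 0 < ρ)
    (f : EuclideanSpace ℝ (Fin n) → ℝ)
    (hf : ∀ y, f y = (1/2) * ∑ i, ((∑ j, A i j * y j) - b i)^2
      + lam * ∑ i, (Real.sqrt (ρ^2 + (∑ j, D i j * y j)^2) - ρ))
    (nA nD : ℝ)
    (hnA : nA = ‖LinearMap.toContinuousLinearMap (Matrix.toEuclideanLin A)‖)
    (hnD : nD = ‖LinearMap.toContinuousLinearMap (Matrix.toEuclideanLin D)‖) :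
    Differentiable ℝ f ∧
    (∀ x z, ‖gradient f x - gradient f z‖ ≤ (nA^2 + (lam / ρ) * nD^2) * ‖x - z‖) ∧
    (nD^2 ≤ 8 →
      ∀ x z, ‖gradient f x - gradient f z‖ ≤ (nA^2 + 8 * lam / ρ) * ‖x - z‖) := by
  set T : EuclideanSpace ℝ (Fin n) →L[ℝ] EuclideanSpace ℝ (Fin m) :=
    LinearMap.toContinuousLinearMap (Matrix.toEuclideanLin A) with hTdef
  set S : EuclideanSpace ℝ (Fin n) →L[ℝ] EuclideanSpace ℝ (Fin p) :=
    LinearMap.toContinuousLinearMap (Matrix.toEuclideanLin D) with hSdef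
  have hTapp : ∀ (y : EuclideanSpace ℝ (Fin n)) (i : Fin m), T y i = ∑ j, A i j * y j := by
    intro y i; rfl
  have hSapp : ∀ (y : EuclideanSpace ℝ (Fin n)) (i : Fin p), S y i = ∑ j, D i j * y j := by
    intro y i; rfl
  set bE : EuclideanSpace ℝ (Fin m) := (WithLp.equiv 2 _).symm b with hbE
  set psi : ℝ → ℝ := fun t => t / Real.sqrt (ρ^2 + t^2) with hpsi
  set Psi : EuclideanSpace ℝ (Fin p) → EuclideanSpace ℝ (Fin p) :=
    fun u => (WithLp.equiv 2 _).symm (fun i => psi (u i)) with hPsi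
  set G : EuclideanSpace ℝ (Fin n) → EuclideanSpace ℝ (Fin n) :=
    fun x => (ContinuousLinearMap.adjoint T) (T x - bE)
      + lam • (ContinuousLinearMap.adjoint S) (Psi (S x)) with hG
  have hbEi : ∀ i, bE i = b i := fun i => rfl
  have hPsii : ∀ (u : EuclideanSpace ℝ (Fin p)) i, Psi u i = psi (u i) := fun u i => rfl
  have hGrad : ∀ x, HasGradientAt f (G x) x := by
    intro x
    rw [hasGradientAt_iff_hasFDerivAt]
    have hfe : f = fun y => (1/2) * ∑ i, ((T y i) - b i)^2
        + lam * ∑ i, (Real.sqrt (ρ^2 + (S y i)^2) - ρ) := by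
      funext y; rw [hf y]; simp only [hTapp, hSapp]
    rw [hfe]
    have h1 : ∀ i : Fin m, HasFDerivAt (fun y : EuclideanSpace ℝ (Fin n) => (T y i - b i)^2)
        ((2 * (T x i - b i)) • ((EuclideanSpace.proj i).comp T)) x := by
      intro i
      have hL : HasFDerivAt (fun y : EuclideanSpace ℝ (Fin n) => T y i - b i)
          ((EuclideanSpace.proj i).comp T) x :=
        (((EuclideanSpace.proj i).comp T).hasFDerivAt).sub_const (b i)
      have := hL.mul hL
      have heq : (fun y : EuclideanSpace ℝ (Fin n) => (T y i - b i)^2)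
          = fun y => (T y i - b i) * (T y i - b i) := by
        funext y; ring
      rw [heq]
      rw [two_mul, add_smul]
      exact this
    have h2 : ∀ i : Fin p, HasFDerivAt
        (fun y : EuclideanSpace ℝ (Fin n) => Real.sqrt (ρ^2 + (S y i)^2) - ρ)
        (psi (S x i) • ((EuclideanSpace.proj i).comp S)) x := by
      intro i
      have hM : HasFDerivAt (fun y : EuclideanSpace ℝ (Fin n) => S y i)
          ((EuclideanSpace.proj i).comp S) x :=
        ((EuclideanSpace.proj i).comp S).hasFDerivAt
      exact (tog_hasDerivAt_phi hρ (S x i)).comp_hasFDerivAt x hM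
    have hsum1 := HasFDerivAt.fun_sum (fun i (_ : i ∈ Finset.univ) => h1 i)
    have hsum2 := HasFDerivAt.fun_sum (fun i (_ : i ∈ Finset.univ) => h2 i)
    have hFD := (hsum1.const_mul (1/2:ℝ)).add (hsum2.const_mul lam)
    refine hFD.congr_fderiv ?_
    symm
    ext v
    simp only [InnerProductSpace.toDual_apply_apply, ContinuousLinearMap.add_apply,
      ContinuousLinearMap.coe_smul', Pi.smul_apply, ContinuousLinearMap.coe_sum',
      Finset.sum_apply, ContinuousLinearMap.coe_comp', Function.comp_apply,
      smul_eq_mul]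
    rw [hG]
    rw [inner_add_left, real_inner_smul_left]
    rw [ContinuousLinearMap.adjoint_inner_left, ContinuousLinearMap.adjoint_inner_left]
    rw [PiLp.inner_apply, PiLp.inner_apply]
    simp only [RCLike.inner_apply, conj_trivial, PiLp.sub_apply]
    simp only [hbEi, hPsii]
    rw [Finset.mul_sum, Finset.mul_sum, Finset.mul_sum]
    congr 1 <;>
      (apply Finset.sum_congr rfl; intro i _;
       simp only [EuclideanSpace.proj, PiLp.proj_apply]; try ring)
  have hdiff : Differentiable ℝ f := fun x => (hGrad x).differentiableAt
  have hgrad_eq : ∀ x, gradient f x = G x := fun x => (hGrad x).gradient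
  have hnA0 : 0 ≤ nA := hnA ▸ norm_nonneg _
  have hnD0 : 0 ≤ nD := hnD ▸ norm_nonneg _
  have hTadj : ‖(ContinuousLinearMap.adjoint T)‖ = ‖T‖ :=
    ContinuousLinearMap.adjoint.norm_map T
  have hSadj : ‖(ContinuousLinearMap.adjoint S)‖ = ‖S‖ :=
    ContinuousLinearMap.adjoint.norm_map S
  have hPsiLip : ∀ (u w : EuclideanSpace ℝ (Fin p)), ‖Psi u - Psi w‖ ≤ (1/ρ) * ‖u - w‖ := by
    intro u w
    rw [EuclideanSpace.norm_eq, EuclideanSpace.norm_eq]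
    rw [show (1/ρ) = Real.sqrt ((1/ρ)^2) from (Real.sqrt_sq (by positivity)).symm,
      ← Real.sqrt_mul (by positivity)]
    apply Real.sqrt_le_sqrt
    rw [Finset.mul_sum]
    apply Finset.sum_le_sum
    intro i _
    have h := tog_psi_lipschitz hρ (w i) (u i)
    have e1 : (Psi u - Psi w) i = psi (u i) - psi (w i) := by
      rw [PiLp.sub_apply, hPsii, hPsii]
    have e2 : (u - w) i = u i - w i := by rw [PiLp.sub_apply]
    rw [e1, e2, Real.norm_eq_abs, Real.norm_eq_abs, sq_abs, sq_abs]
    have h2 : |psi (u i) - psi (w i)|^2 ≤ ((1/ρ) * |u i - w i|)^2 :=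
      pow_le_pow_left₀ (abs_nonneg _) h 2
    calc (psi (u i) - psi (w i))^2 = |psi (u i) - psi (w i)|^2 := (sq_abs _).symm
      _ ≤ ((1/ρ) * |u i - w i|)^2 := h2
      _ = (1/ρ)^2 * (u i - w i)^2 := by rw [mul_pow, sq_abs]
  have key : ∀ x z, ‖G x - G z‖ ≤ (nA^2 + (lam/ρ)*nD^2) * ‖x - z‖ := by
    intro x z
    have hdecomp : G x - G z = (ContinuousLinearMap.adjoint T) (T (x - z))
        + lam • (ContinuousLinearMap.adjoint S) (Psi (S x) - Psi (S z)) := by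
      simp only [hG, map_sub, smul_sub]
      abel
    have e1 : ‖(ContinuousLinearMap.adjoint T) (T (x - z))‖ ≤ nA * nA * ‖x - z‖ := by
      calc ‖(ContinuousLinearMap.adjoint T) (T (x - z))‖
          ≤ ‖(ContinuousLinearMap.adjoint T)‖ * ‖T (x - z)‖ :=
            ContinuousLinearMap.le_opNorm _ _
        _ = nA * ‖T (x - z)‖ := by rw [hTadj, ← hnA]
        _ ≤ nA * (nA * ‖x - z‖) := by
            apply mul_le_mul_of_nonneg_left _ hnA0
            rw [hnA]; exact ContinuousLinearMap.le_opNorm _ _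
        _ = nA * nA * ‖x - z‖ := by ring
    have e2 : ‖(ContinuousLinearMap.adjoint S) (Psi (S x) - Psi (S z))‖
        ≤ nD * ((1/ρ) * (nD * ‖x - z‖)) := by
      calc ‖(ContinuousLinearMap.adjoint S) (Psi (S x) - Psi (S z))‖
          ≤ ‖(ContinuousLinearMap.adjoint S)‖ * ‖Psi (S x) - Psi (S z)‖ :=
            ContinuousLinearMap.le_opNorm _ _
        _ = nD * ‖Psi (S x) - Psi (S z)‖ := by rw [hSadj, ← hnD]
        _ ≤ nD * ((1/ρ) * ‖S x - S z‖) :=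
            mul_le_mul_of_nonneg_left (hPsiLip _ _) hnD0
        _ ≤ nD * ((1/ρ) * (nD * ‖x - z‖)) := by
            apply mul_le_mul_of_nonneg_left _ hnD0
            apply mul_le_mul_of_nonneg_left _ (by positivity)
            rw [← map_sub, hnD]
            exact ContinuousLinearMap.le_opNorm _ _
    calc ‖G x - G z‖
        = ‖(ContinuousLinearMap.adjoint T) (T (x - z))
            + lam • (ContinuousLinearMap.adjoint S) (Psi (S x) - Psi (S z))‖ := by
          rw [hdecomp]
      _ ≤ ‖(ContinuousLinearMap.adjoint T) (T (x - z))‖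
            + ‖lam • (ContinuousLinearMap.adjoint S) (Psi (S x) - Psi (S z))‖ :=
          norm_add_le _ _
      _ = ‖(ContinuousLinearMap.adjoint T) (T (x - z))‖
            + lam * ‖(ContinuousLinearMap.adjoint S) (Psi (S x) - Psi (S z))‖ := by
          rw [norm_smul, Real.norm_eq_abs, abs_of_pos hlam]
      _ ≤ nA * nA * ‖x - z‖ + lam * (nD * ((1/ρ) * (nD * ‖x - z‖))) :=
          add_le_add e1 (mul_le_mul_of_nonneg_left e2 hlam.le)
      _ = (nA^2 + (lam/ρ)*nD^2) * ‖x - z‖ := by ring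
  refine ⟨hdiff, ?_, ?_⟩
  · intro x z
    rw [hgrad_eq, hgrad_eq]
    exact key x z
  · intro hD8 x z
    rw [hgrad_eq, hgrad_eq]
    refine le_trans (key x z) ?_
    apply mul_le_mul_of_nonneg_right _ (norm_nonneg _)
    have : (lam/ρ)*nD^2 ≤ 8*lam/ρ := by
      have h1 : (lam/ρ)*nD^2 ≤ (lam/ρ)*8 :=
        mul_le_mul_of_nonneg_left hD8 (by positivity)
      linarith [h1, show (lam/ρ)*8 = 8*lam/ρ by ring]
    linarith
end
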